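/- Descent with extrapolation: let f_s be convex differentiable with L_s-Lipschitz gradient, h convex, Ω nonempty closed convex, β ∈ [0,1). Given x^{k-1}, x^k ∈ Ω, set y^k = x^k + β_k(x^k − x^{k-1}) with β_k ∈ [0,β], and x^{k+1} = argmin_{x∈Ω}{ h(x) + ⟨∇f_s(y^k), x − y^k⟩ + (L_s/2)‖x − y^k‖² }. Then (h+f_s)(x^{k+1}) + (L_s/2)‖x^{k+1} − x^k‖² ≤ (h+f_s)(x^k) + (L_s β²/2)‖x^k − x^{k-1}‖². -/

import Mathlib

open RealInnerProductSpace
open Set Filter Topology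

variable {E : Type*} [NormedAddCommGroup E] [InnerProductSpace ℝ E] [CompleteSpace E]

lemma line_deriv (fs : E → ℝ) (g : E → E) (hgrad : ∀ x, HasGradientAt fs (g x) x)
    (x v : E) (t : ℝ) :
    HasDerivAt (fun s : ℝ => fs (x + s • v)) ⟪g (x + t • v), v⟫ t := by
  have hc : HasDerivAt (fun s : ℝ => x + s • v) v t := by
    simpa using ((hasDerivAt_id t).smul_const v).const_add x
  have hf := (hgrad (x + t • v)).hasFDerivAt
  have := hf.comp_hasDerivAt t hc
  simp [InnerProductSpace.toDual_apply_apply] at this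
  exact this

/-- descent lemma -/
lemma descent (fs : E → ℝ) (g : E → E) (Ls : ℝ) (hLs : 0 < Ls)
    (hgrad : ∀ x, HasGradientAt fs (g x) x)
    (hLip : ∀ x y, ‖g x - g y‖ ≤ Ls * ‖x - y‖) (x v : E) :
    fs (x + v) ≤ fs x + ⟪g x, v⟫ + Ls / 2 * ‖v‖ ^ 2 := by
  set ψ : ℝ → ℝ := fun t => fs (x + t • v) - t * ⟪g x, v⟫ - Ls / 2 * t ^ 2 * ‖v‖ ^ 2 with hψ
  have hd : ∀ t : ℝ, HasDerivAt ψ (⟪g (x + t • v), v⟫ - ⟪g x, v⟫ - Ls * t * ‖v‖ ^ 2) t := by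
    intro t
    have h1 := line_deriv fs g hgrad x v t
    have h2 : HasDerivAt (fun s : ℝ => s * ⟪g x, v⟫) ⟪g x, v⟫ t := by
      simpa using (hasDerivAt_id t).mul_const ⟪g x, v⟫
    have h3 : HasDerivAt (fun s : ℝ => Ls / 2 * s ^ 2 * ‖v‖ ^ 2) (Ls * t * ‖v‖ ^ 2) t := by
      have := ((hasDerivAt_pow 2 t).const_mul (Ls / 2)).mul_const (‖v‖ ^ 2)
      convert this using 1
      · rfl
      · rfl
      · rw [show (2:ℕ) - 1 = 1 from rfl, pow_one]
        ring
    exact (h1.sub h2).sub h3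
  have hanti : AntitoneOn ψ (Icc (0:ℝ) 1) := by
    apply antitoneOn_of_deriv_nonpos (convex_Icc 0 1)
    · exact (Differentiable.continuous fun t => (hd t).differentiableAt).continuousOn
    · intro t _
      exact (hd t).differentiableAt.differentiableWithinAt
    · intro t ht
      rw [(hd t).deriv]
      rw [interior_Icc] at ht
      have ht0 : 0 ≤ t := le_of_lt ht.1
      have : ⟪g (x + t • v) - g x, v⟫ ≤ Ls * t * ‖v‖ ^ 2 := by
        calc ⟪g (x + t • v) - g x, v⟫ ≤ ‖g (x + t • v) - g x‖ * ‖v‖ := real_inner_le_norm _ _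
          _ ≤ (Ls * ‖(x + t • v) - x‖) * ‖v‖ := by
              gcongr; exact hLip _ _
          _ = Ls * t * ‖v‖ ^ 2 := by
              simp [norm_smul, abs_of_nonneg ht0]; ring
      rw [inner_sub_left] at this
      linarith
  have key := hanti (by norm_num : (0:ℝ) ∈ Icc (0:ℝ) 1) (by norm_num : (1:ℝ) ∈ Icc (0:ℝ) 1) zero_le_one
  have h0 : ψ 0 = fs x := by simp [hψ]
  have h1 : ψ 1 = fs (x + v) - ⟪g x, v⟫ - Ls / 2 * ‖v‖ ^ 2 := by simp [hψ]
  rw [h0, h1] at key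
  linarith

/-- gradient inequality for convex functions -/
lemma grad_ineq (fs : E → ℝ) (g : E → E) (hfs : ConvexOn ℝ Set.univ fs)
    (hgrad : ∀ x, HasGradientAt fs (g x) x) (x v : E) :
    fs x + ⟪g x, v⟫ ≤ fs (x + v) := by
  set φ : ℝ → ℝ := fun s => fs (x + s • v) with hφ
  have hd : HasDerivAt φ ⟪g x, v⟫ 0 := by simpa using line_deriv fs g hgrad x v 0
  have hslope : Tendsto (slope φ 0) (𝓝[>] (0:ℝ)) (𝓝 ⟪g x, v⟫) :=
    (hasDerivAt_iff_tendsto_slope.1 hd).mono_left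
      (nhdsWithin_mono 0 fun t ht => ne_of_gt ht)
  have hub : ∀ᶠ t in 𝓝[>] (0:ℝ), slope φ 0 t ≤ fs (x + v) - fs x := by
    filter_upwards [Ioc_mem_nhdsGT zero_lt_one] with t ht
    have ht0 : 0 < t := ht.1
    have ht1 : t ≤ 1 := ht.2
    have hconv := hfs.2 (Set.mem_univ x) (Set.mem_univ (x + v))
      (show (0:ℝ) ≤ 1 - t by linarith) (show (0:ℝ) ≤ t from ht0.le) (by ring)
    have hpt : (1 - t) • x + t • (x + v) = x + t • v := by
      rw [smul_add, sub_smul, one_smul]; abel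
    rw [hpt] at hconv
    have hφ0 : φ 0 = fs x := by simp [hφ]
    rw [slope_def_field, hφ0, sub_zero, div_le_iff₀ ht0]
    have hφt : φ t ≤ (1 - t) * fs x + t * fs (x + v) := hconv
    nlinarith [hφt]
  have := le_of_tendsto hslope hub
  linarith

lemma norm_combo_sq (a b : E) (t : ℝ) :
    ‖(1 - t) • a + t • b‖ ^ 2 =
      (1 - t) * ‖a‖ ^ 2 + t * ‖b‖ ^ 2 - t * (1 - t) * ‖a - b‖ ^ 2 := by
  have e1 : ‖(1 - t) • a + t • b‖ ^ 2 = ⟪(1 - t) • a + t • b, (1 - t) • a + t • b⟫ :=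
    (real_inner_self_eq_norm_sq _).symm
  have e2 : ‖a‖ ^ 2 = ⟪a, a⟫ := (real_inner_self_eq_norm_sq a).symm
  have e3 : ‖b‖ ^ 2 = ⟪b, b⟫ := (real_inner_self_eq_norm_sq b).symm
  have e4 : ‖a - b‖ ^ 2 = ⟪a - b, a - b⟫ := (real_inner_self_eq_norm_sq _).symm
  rw [e1, e2, e3, e4]
  simp only [inner_add_left, inner_add_right, inner_sub_left, inner_sub_right,
    real_inner_smul_left, real_inner_smul_right, real_inner_comm b a]
  ring

lemma strong_min (h : E → ℝ) (hh : ConvexOn ℝ Set.univ h) (Ω : Set E)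
    (hconv : Convex ℝ Ω) (gv w p q : E) (L : ℝ) (hL : 0 < L)
    (hp : p ∈ Ω) (hq : q ∈ Ω)
    (hmin : ∀ x ∈ Ω, h p + ⟪gv, p - w⟫ + L / 2 * ‖p - w‖ ^ 2 ≤
      h x + ⟪gv, x - w⟫ + L / 2 * ‖x - w‖ ^ 2) :
    h p + ⟪gv, p - w⟫ + L / 2 * ‖p - w‖ ^ 2 + L / 2 * ‖q - p‖ ^ 2 ≤
      h q + ⟪gv, q - w⟫ + L / 2 * ‖q - w‖ ^ 2 := by
  set Fp := h p + ⟪gv, p - w⟫ + L / 2 * ‖p - w‖ ^ 2 with hFp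
  set Fq := h q + ⟪gv, q - w⟫ + L / 2 * ‖q - w‖ ^ 2 with hFq
  set N := ‖q - p‖ ^ 2 with hN
  have hN0 : 0 ≤ N := sq_nonneg _
  have step : ∀ t : ℝ, 0 < t → t ≤ 1 → Fp + L / 2 * (1 - t) * N ≤ Fq := by
    intro t ht0 ht1
    set z := (1 - t) • p + t • q with hz
    have hzΩ : z ∈ Ω := hconv hp hq (by linarith) ht0.le (by ring)
    have hzw : z - w = (1 - t) • (p - w) + t • (q - w) := by
      rw [hz]; module
    have hhz : h z ≤ (1 - t) * h p + t * h q :=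
      hh.2 (Set.mem_univ p) (Set.mem_univ q)
        (show (0:ℝ) ≤ 1 - t by linarith) ht0.le (by ring)
    have hin : ⟪gv, z - w⟫ = (1 - t) * ⟪gv, p - w⟫ + t * ⟪gv, q - w⟫ := by
      rw [hzw, inner_add_right, real_inner_smul_right, real_inner_smul_right]
    have hnz : ‖z - w‖ ^ 2 =
        (1 - t) * ‖p - w‖ ^ 2 + t * ‖q - w‖ ^ 2 - t * (1 - t) * N := by
      rw [hzw, norm_combo_sq]
      have e : p - w - (q - w) = p - q := by abel
      rw [e, hN, norm_sub_rev p q]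
    have hFz := hmin z hzΩ
    have key : t * (Fp + L / 2 * (1 - t) * N) ≤ t * Fq := by
      rw [hin, hnz] at hFz
      nlinarith [hFz, hhz]
    exact le_of_mul_le_mul_left key ht0
  refine le_of_forall_pos_le_add fun ε hε => ?_
  set K := L / 2 * N with hK
  have hK0 : 0 ≤ K := by positivity
  set t := min 1 (ε / (K + 1)) with ht
  have ht0 : 0 < t := lt_min one_pos (by positivity)
  have ht1 : t ≤ 1 := min_le_left _ _
  have htε : t ≤ ε / (K + 1) := min_le_right _ _
  have htK : t * K ≤ ε := by
    calc t * K ≤ t * (K + 1) := by nlinarith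
      _ ≤ ε / (K + 1) * (K + 1) := mul_le_mul_of_nonneg_right htε (by positivity)
      _ = ε := div_mul_cancel₀ _ (by positivity)
  have hstep := step t ht0 ht1
  have hKt : L / 2 * (1 - t) * N = K - t * K := by rw [hK]; ring
  rw [hKt] at hstep
  linarith

theorem stmt18 {n : ℕ} (fs h : EuclideanSpace ℝ (Fin n) → ℝ)
    (g : EuclideanSpace ℝ (Fin n) → EuclideanSpace ℝ (Fin n))
    (Ls β βk : ℝ) (hLs : 0 < Ls) (hβ : β ∈ Set.Ico (0 : ℝ) 1)
    (hβk : βk ∈ Set.Icc 0 β)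
    (hfs : ConvexOn ℝ Set.univ fs)
    (hgrad : ∀ x, HasGradientAt fs (g x) x)
    (hLip : ∀ x y, ‖g x - g y‖ ≤ Ls * ‖x - y‖)
    (hh : ConvexOn ℝ Set.univ h)
    (Ω : Set (EuclideanSpace ℝ (Fin n))) (hne : Ω.Nonempty) (hcl : IsClosed Ω)
    (hconv : Convex ℝ Ω)
    (xkm1 xk xkp1 yk : EuclideanSpace ℝ (Fin n))
    (hxkm1 : xkm1 ∈ Ω) (hxk : xk ∈ Ω) (hxkp1 : xkp1 ∈ Ω)
    (hyk : yk = xk + βk • (xk - xkm1))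
    (hmin : ∀ x ∈ Ω,
      h xkp1 + ⟪g yk, xkp1 - yk⟫ + Ls / 2 * ‖xkp1 - yk‖ ^ 2 ≤
        h x + ⟪g yk, x - yk⟫ + Ls / 2 * ‖x - yk‖ ^ 2) :
    h xkp1 + fs xkp1 + Ls / 2 * ‖xkp1 - xk‖ ^ 2 ≤
      h xk + fs xk + Ls * β ^ 2 / 2 * ‖xk - xkm1‖ ^ 2 := by
  have hdesc : fs xkp1 ≤ fs yk + ⟪g yk, xkp1 - yk⟫ + Ls / 2 * ‖xkp1 - yk‖ ^ 2 := by
    have := descent fs g Ls hLs hgrad hLip yk (xkp1 - yk)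
    simpa using this
  have hgi : fs yk + ⟪g yk, xk - yk⟫ ≤ fs xk := by
    have := grad_ineq fs g hfs hgrad yk (xk - yk)
    simpa using this
  have hsm := strong_min h hh Ω hconv (g yk) yk xkp1 xk Ls hLs hxkp1 hxk hmin
  have hrev : ‖xk - xkp1‖ = ‖xkp1 - xk‖ := norm_sub_rev _ _
  rw [hrev] at hsm
  have hky : ‖xk - yk‖ ^ 2 = βk ^ 2 * ‖xk - xkm1‖ ^ 2 := by
    have e : xk - yk = -(βk • (xk - xkm1)) := by rw [hyk]; abel
    rw [e, norm_neg, norm_smul, Real.norm_eq_abs, mul_pow, sq_abs]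
  have hββ : Ls / 2 * ‖xk - yk‖ ^ 2 ≤ Ls * β ^ 2 / 2 * ‖xk - xkm1‖ ^ 2 := by
    rw [hky]
    have hβk2 : βk ^ 2 ≤ β ^ 2 := by nlinarith [hβk.1, hβk.2]
    have hm := mul_le_mul_of_nonneg_right hβk2 (sq_nonneg ‖xk - xkm1‖)
    nlinarith [hm, hLs.le]
  linarith
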